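/- Let F be a finite field with 2^n elements and let α, β ∈ F satisfy αβ ≠ 0 and α ≠ β. If the polynomials X² + αX + 1 and X² + βX + 1 are both irreducible over F, then with γ = αβ/(α+β) the polynomial X² + γX + 1 has a root in F (i.e., X² + γX + 1 is reducible in F[X]). -/

import Mathlib

open Polynomial

section Aux

variable {F : Type*} [Field F] [Fintype F]

/-- The Artin–Schreier map `x ↦ x² + x` as an additive hom in characteristic 2. -/
private def asMap (h2 : (2 : F) = 0) : F →+ F where
  toFun x := x ^ 2 + x
  map_zero' := by simp
  map_add' x y := by linear_combination (x * y) * h2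

private lemma no_root_iff_not_in_range (h2 : (2 : F) = 0) {α : F} (hα0 : α ≠ 0)
    (h : ¬ ∃ x : F, x ^ 2 + α * x + 1 = 0) : α⁻¹ ^ 2 ∉ (asMap h2).range := by
  rintro ⟨y, hy⟩
  simp only [asMap, AddMonoidHom.coe_mk, ZeroHom.coe_mk] at hy
  have hinv : α ^ 2 * α⁻¹ ^ 2 = 1 := by field_simp
  exact h ⟨α * y, by linear_combination α ^ 2 * hy + hinv + h2⟩

private lemma sum_mem_range (h2 : (2 : F) = 0) (n : ℕ) (hcard : Fintype.card F = 2 ^ n)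
    {a b : F} (ha : a ∉ (asMap h2).range) (hb : b ∉ (asMap h2).range) :
    a + b ∈ (asMap h2).range := by
  set H := (asMap h2).range with hH
  have hker : ((asMap h2).ker : Set F) = {0, 1} := by
    ext x
    simp only [AddMonoidHom.mem_ker, SetLike.mem_coe, Set.mem_insert_iff, Set.mem_singleton_iff]
    constructor
    · intro hx
      have hx' : (asMap h2) x = x ^ 2 + x := rfl
      rw [hx'] at hx
      have hfac : x * (x + 1) = 0 := by linear_combination hx
      rcases mul_eq_zero.mp hfac with h | h
      · exact Or.inl h
      · right; linear_combination h - h2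
    · rintro (rfl | rfl)
      · simp [asMap]
      · show (1:F) ^ 2 + 1 = 0
        linear_combination h2
  have hn : n ≠ 0 := by
    rintro rfl; simp at hcard; exact absurd hcard Fintype.one_lt_card.ne'
  have hcardF : Nat.card F = 2 ^ n := by rw [Nat.card_eq_fintype_card, hcard]
  have hkercard : Nat.card (asMap h2).ker = 2 := by
    have h' : Nat.card (asMap h2).ker = ((asMap h2).ker : Set F).ncard :=
      Nat.card_coe_set_eq _
    rw [h', hker, Set.ncard_pair (zero_ne_one)]
  have hpow : 2 ^ n = 2 * 2 ^ (n - 1) := by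
    conv_lhs => rw [show n = (n - 1) + 1 by omega]
    rw [pow_succ]; ring
  have hrange : Nat.card H = 2 ^ (n - 1) := by
    have h1 : Nat.card (asMap h2).ker * (asMap h2).ker.index = 2 ^ n := by
      rw [AddSubgroup.card_mul_index, hcardF]
    have h2' : (asMap h2).ker.index = Nat.card H := by
      unfold AddSubgroup.index
      exact Nat.card_congr (QuotientAddGroup.quotientKerEquivRange (asMap h2)).toEquiv
    rw [hkercard, h2'] at h1
    omega
  have hindex : H.index = 2 := by
    have h1 : Nat.card H * H.index = 2 ^ n := by rw [AddSubgroup.card_mul_index, hcardF]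
    rw [hrange] at h1
    have hpos : 0 < 2 ^ (n - 1) := Nat.pow_pos (by norm_num)
    exact Nat.eq_of_mul_eq_mul_left hpos (by rw [h1, hpow]; ring)
  have hq : Nat.card (F ⧸ H) = 2 := hindex
  obtain ⟨t, ht, huniq⟩ := (Nat.card_eq_two_iff' (0 : F ⧸ H)).mp hq
  have haq : (QuotientAddGroup.mk a : F ⧸ H) ≠ 0 := by
    rwa [ne_eq, QuotientAddGroup.eq_zero_iff]
  have hbq : (QuotientAddGroup.mk b : F ⧸ H) ≠ 0 := by
    rwa [ne_eq, QuotientAddGroup.eq_zero_iff]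
  have heq : (QuotientAddGroup.mk a : F ⧸ H) = QuotientAddGroup.mk b := by
    rw [huniq _ haq, huniq _ hbq]
  have hmem : -a + b ∈ H := QuotientAddGroup.eq.mp heq
  have haa : a + a = 0 := by linear_combination a * h2
  have hneg : -a = a := neg_eq_of_add_eq_zero_left haa
  rwa [hneg] at hmem

end Aux

private lemma natdeg_quad (F : Type*) [Field F] (c : F) :
    (X ^ 2 + C c * X + 1 : F[X]).natDegree = 2 := by compute_degree!

private lemma eval_quad {F : Type*} [Field F] (c x : F) :
    (X ^ 2 + C c * X + 1 : F[X]).eval x = x ^ 2 + c * x + 1 := by simp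

private lemma irr_no_root {F : Type*} [Field F] {c : F}
    (h : Irreducible (X ^ 2 + C c * X + 1 : F[X])) : ¬ ∃ x : F, x ^ 2 + c * x + 1 = 0 := by
  rintro ⟨x, hx⟩
  have hnd := natdeg_quad F c
  have hp0 : (X ^ 2 + C c * X + 1 : F[X]) ≠ 0 := fun h0 => by simp [h0] at hnd
  have hroots := (irreducible_iff_roots_eq_zero_of_degree_le_three (by omega) (by omega)).mp h
  have : x ∈ (X ^ 2 + C c * X + 1 : F[X]).roots :=
    (mem_roots hp0).mpr (by rw [IsRoot, eval_quad]; exact hx)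
  rw [hroots] at this
  exact Multiset.notMem_zero _ this



/-- Let `F = GF(2^n)` and `α β ∈ F` with `αβ ≠ 0`, `α ≠ β`. If `X² + αX + 1` and
`X² + βX + 1` are both irreducible over `F`, then with `γ = αβ/(α+β)` the polynomial
`X² + γX + 1` has a root in `F`, i.e. `X² + γX + 1` is reducible in `F[X]`. -/
theorem gamma_quadratic_has_root (F : Type*) [Field F] [Fintype F] (n : ℕ)
    (hcard : Fintype.card F = 2 ^ n) (α β : F) (hαβ : α * β ≠ 0) (hne : α ≠ β)
    (hα : Irreducible (X ^ 2 + C α * X + 1 : F[X]))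
    (hβ : Irreducible (X ^ 2 + C β * X + 1 : F[X]))
    (γ : F) (hγ : γ = α * β / (α + β)) :
    (∃ x : F, x ^ 2 + γ * x + 1 = 0) ∧
      ¬ Irreducible (X ^ 2 + C γ * X + 1 : F[X]) := by
  have h2 : (2 : F) = 0 := by
    have h := FiniteField.cast_card_eq_zero F
    rw [hcard] at h
    push_cast at h
    have hn : n ≠ 0 := by
      rintro rfl; simp at hcard; exact absurd hcard Fintype.one_lt_card.ne'
    exact pow_eq_zero_iff hn |>.mp h
  have hα0 : α ≠ 0 := left_ne_zero_of_mul hαβ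
  have hβ0 : β ≠ 0 := right_ne_zero_of_mul hαβ
  have hsum : α + β ≠ 0 := by
    intro h
    apply hne
    have : -β = β := neg_eq_of_add_eq_zero_left (by linear_combination β * h2)
    linear_combination h + this
  have hγ0 : γ ≠ 0 := by rw [hγ]; exact div_ne_zero hαβ hsum
  have hA : α⁻¹ ^ 2 ∉ (asMap h2).range := no_root_iff_not_in_range h2 hα0 (irr_no_root hα)
  have hB : β⁻¹ ^ 2 ∉ (asMap h2).range := no_root_iff_not_in_range h2 hβ0 (irr_no_root hβ)
  obtain ⟨y, hy⟩ := sum_mem_range h2 n hcard hA hB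
  simp only [asMap, AddMonoidHom.coe_mk, ZeroHom.coe_mk] at hy
  have hid : α⁻¹ ^ 2 + β⁻¹ ^ 2 = γ⁻¹ ^ 2 := by
    rw [hγ]
    field_simp
    ring_nf
    linear_combination (-(α * β)) * h2
  have hinvγ : γ ^ 2 * γ⁻¹ ^ 2 = 1 := by field_simp
  have hx : (γ * y) ^ 2 + γ * (γ * y) + 1 = 0 := by
    rw [hid] at hy
    linear_combination γ ^ 2 * hy + hinvγ + h2
  refine ⟨⟨γ * y, hx⟩, fun hirr => irr_no_root hirr ⟨γ * y, hx⟩⟩
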